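/- Let A be a unipotent invertible linear operator on a finite-dimensional real vector space V, with N = A − Id nilpotent of index k+1 (N^{k+1} = 0, N^k ≠ 0), and k = 2ℓ even. Then the image of N^{2ℓ} is pointwise A-invariant: A ∘ N^{2ℓ} = N^{2ℓ}. Moreover, N^{2ℓ}/(2ℓ)! = lim_{m→∞} A^m / m^{2ℓ} as linear maps. -/
import Mathlib


open Filter Finset

lemma auxDesc (j : ℕ) :
    Tendsto (fun m : ℕ => (Nat.descFactorial m j : ℝ) / (m : ℝ) ^ j) atTop (nhds 1) := by
  have key : Tendsto (fun m : ℕ => ∏ i ∈ range j, (1 - (i : ℝ) / m)) atTop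
      (nhds (∏ _i ∈ range j, (1 : ℝ))) := by
    refine tendsto_finset_prod _ fun i _ => ?_
    have h0 : Tendsto (fun m : ℕ => (i : ℝ) / m) atTop (nhds 0) :=
      (tendsto_const_nhds (x := (i:ℝ))).div_atTop (tendsto_natCast_atTop_atTop (R := ℝ))
    simpa using (tendsto_const_nhds (x := (1:ℝ))).sub h0
  have heq : (fun m : ℕ => ∏ i ∈ range j, (1 - (i : ℝ) / m)) =ᶠ[atTop]
      (fun m : ℕ => (Nat.descFactorial m j : ℝ) / (m : ℝ) ^ j) := by
    filter_upwards [eventually_ge_atTop (j + 1)] with m hm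
    have hm0 : (m : ℝ) ≠ 0 := Nat.cast_ne_zero.mpr (by omega)
    rw [Nat.descFactorial_eq_prod_range]
    rw [Nat.cast_prod]
    have hpow : ((m:ℝ)) ^ j = ∏ _i ∈ range j, (m:ℝ) := by simp
    rw [hpow, ← Finset.prod_div_distrib]
    refine Finset.prod_congr rfl fun i hi => ?_
    have hi' : i ≤ m := le_trans (Nat.le_of_lt (Finset.mem_range.mp hi)) (by omega)
    rw [Nat.cast_sub hi', sub_div, div_self hm0]
  simpa using key.congr' heq

lemma auxSmall (j k : ℕ) (h : j < k) :
    Tendsto (fun m : ℕ => (Nat.choose m j : ℝ) / (m : ℝ) ^ k) atTop (nhds 0) := by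
  have h0 : Tendsto (fun m : ℕ => ((m : ℝ))⁻¹) atTop (nhds 0) :=
    tendsto_inv_atTop_zero.comp (tendsto_natCast_atTop_atTop (R := ℝ))
  refine squeeze_zero' (g := fun m : ℕ => ((m : ℝ))⁻¹) ?_ ?_ h0
  · filter_upwards [eventually_ge_atTop 1] with m hm
    positivity
  · filter_upwards [eventually_ge_atTop 1] with m hm
    have hm1 : (1 : ℝ) ≤ (m : ℝ) := by exact_mod_cast hm
    have hc : (Nat.choose m j : ℝ) ≤ (m : ℝ) ^ j := by
      exact_mod_cast Nat.cast_le.mpr (Nat.choose_le_pow m j)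
    have hpk : (0:ℝ) < (m : ℝ) ^ k := by positivity
    rw [div_le_iff₀ hpk]
    calc (Nat.choose m j : ℝ) ≤ (m : ℝ) ^ j := hc
      _ ≤ (m : ℝ) ^ (k - 1) := pow_le_pow_right₀ hm1 (by omega)
      _ = ((m:ℝ))⁻¹ * (m : ℝ) ^ k := by
          rw [inv_mul_eq_div, eq_div_iff (by positivity), ← pow_succ]
          congr 1; omega

lemma auxChoose (j : ℕ) :
    Tendsto (fun m : ℕ => (Nat.choose m j : ℝ) / (m : ℝ) ^ j) atTop
      (nhds ((j.factorial : ℝ))⁻¹) := by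
  have hfac : ∀ m : ℕ, (Nat.choose m j : ℝ)
      = (Nat.descFactorial m j : ℝ) / (j.factorial : ℝ) := by
    intro m
    rw [eq_div_iff (by exact_mod_cast j.factorial_ne_zero)]
    push_cast [Nat.descFactorial_eq_factorial_mul_choose]
    ring
  have : (fun m : ℕ => (Nat.choose m j : ℝ) / (m : ℝ) ^ j)
      = fun m : ℕ => ((Nat.descFactorial m j : ℝ) / (m : ℝ) ^ j) / (j.factorial : ℝ) :=
    funext fun m => by rw [hfac]; ring
  rw [this]
  simpa [one_div] using (auxDesc j).div_const (j.factorial : ℝ)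

theorem stmt4 {V : Type*} [NormedAddCommGroup V] [NormedSpace ℝ V] [FiniteDimensional ℝ V]
    (A : V ≃ₗ[ℝ] V) (ℓ : ℕ) (N : V →ₗ[ℝ] V)
    (hN : N = (A : V →ₗ[ℝ] V) - LinearMap.id)
    (hnil : N ^ (2 * ℓ + 1) = 0) (hne : N ^ (2 * ℓ) ≠ 0) :
    (A : V →ₗ[ℝ] V) * N ^ (2 * ℓ) = N ^ (2 * ℓ) ∧
    ∀ v : V, Tendsto (fun m : ℕ => ((m : ℝ) ^ (2 * ℓ))⁻¹ • (A ^ m) v) atTop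
      (nhds ((((2 * ℓ).factorial : ℝ))⁻¹ • (N ^ (2 * ℓ)) v)) := by
  set k := 2 * ℓ with hk
  have hA : (A : V →ₗ[ℝ] V) = N + 1 := by
    rw [hN, Module.End.one_eq_id]; abel
  have hzero : ∀ i, k < i → N ^ i = 0 := by
    intro i hi
    have : N ^ i = N ^ (k + 1) * N ^ (i - (k + 1)) := by
      rw [← pow_add]; congr 1; omega
    rw [this, hnil, zero_mul]
  constructor
  · rw [hA, add_mul, one_mul, ← pow_succ', hzero (k+1) (by omega), zero_add]
  · intro v
    have hexp : ∀ m : ℕ, k ≤ m →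
        (A ^ m) v = ∑ j ∈ range (k + 1), (Nat.choose m j : ℝ) • (N ^ j) v := by
      intro m hm
      have h1 : (A ^ m) v = (((A : V →ₗ[ℝ] V)) ^ m) v := by
        rw [LinearEquiv.pow_apply, Module.End.pow_apply]
        rfl
      rw [h1, hA, (Commute.one_right N).add_pow m]
      have hsub : range (k + 1) ⊆ range (m + 1) := Finset.range_subset_range.mpr (by omega)
      have hsum : ∑ j ∈ range (m + 1), N ^ j * 1 ^ (m - j) * (Nat.choose m j : V →ₗ[ℝ] V)
          = ∑ j ∈ range (k + 1), N ^ j * 1 ^ (m - j) * (Nat.choose m j : V →ₗ[ℝ] V) := by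
        refine (Finset.sum_subset hsub fun j _ hj => ?_).symm
        rw [hzero j (by simp only [Finset.mem_range, not_lt] at hj; omega)]
        simp
      rw [hsum, LinearMap.sum_apply]
      refine Finset.sum_congr rfl fun j _ => ?_
      rw [one_pow, mul_one, Module.End.mul_apply]
      have : ((Nat.choose m j : V →ₗ[ℝ] V)) v = (Nat.choose m j : ℝ) • v := by
        simp [Nat.cast_smul_eq_nsmul]
      rw [this, map_smul]
    have hlim : Tendsto (fun m : ℕ =>
        ∑ j ∈ range (k + 1), ((Nat.choose m j : ℝ) / (m : ℝ) ^ k) • (N ^ j) v) atTop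
        (nhds (∑ j ∈ range (k + 1),
          (if j = k then ((k.factorial : ℝ))⁻¹ else 0) • (N ^ j) v)) := by
      refine tendsto_finset_sum _ fun j hj => ?_
      rcases eq_or_lt_of_le (Nat.le_of_lt_succ (Finset.mem_range.mp hj)) with hje | hjlt
      · subst hje
        simp only [if_pos rfl]
        exact (auxChoose _).smul_const _
      · rw [if_neg (by omega), zero_smul]
        simpa using (auxSmall j k hjlt).smul_const ((N ^ j) v)
    have hval : (∑ j ∈ range (k + 1),
        (if j = k then ((k.factorial : ℝ))⁻¹ else 0) • (N ^ j) v)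
        = ((k.factorial : ℝ))⁻¹ • (N ^ k) v := by
      rw [Finset.sum_eq_single k (fun j _ hj => by simp [hj])
        (fun h => absurd (Finset.self_mem_range_succ k) h), if_pos rfl]
    rw [hval] at hlim
    refine hlim.congr' ?_
    filter_upwards [eventually_ge_atTop k] with m hm
    rw [hexp m hm, Finset.smul_sum]
    exact (Finset.sum_congr rfl fun j _ => by rw [smul_smul, div_eq_inv_mul]).symm
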